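/- Let φ_1,…,φ_m be a 2-design of unit vectors in ℂ^{d_A}⊗ℂ^{d_B}. Then the average squared Schmidt coefficient sum (purity of reduction to A) equals (d_A + d_B)/(d_A d_B + 1); in particular it is strictly greater than 1/d_A and strictly less than 1 whenever d_A, d_B ≥ 2. -/

import Mathlib

open Matrix BigOperators Finset Kronecker
open scoped ComplexOrder

noncomputable section

/-- The rank-one projector `|v⟩⟨v|`. -/
def proj {n : Type*} [Fintype n] (v : n → ℂ) : Matrix n n ℂ :=
  Matrix.of fun a b => v a * star (v b)

/-- The inner product `⟨v|w⟩` on `n → ℂ`. -/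
def inner' {n : Type*} [Fintype n] (v w : n → ℂ) : ℂ := ∑ i, star (v i) * w i

/-- A density matrix: positive semidefinite with unit trace. -/
def IsDensity {n : Type*} [Fintype n] [DecidableEq n] (ρ : Matrix n n ℂ) : Prop :=
  ρ.PosSemidef ∧ ρ.trace = 1


/-- The swap operator on `ℂ^n ⊗ ℂ^n`. -/
def swapM (n : Type*) [Fintype n] [DecidableEq n] : Matrix (n × n) (n × n) ℂ :=
  Matrix.of fun p q => if p.1 = q.2 ∧ p.2 = q.1 then 1 else 0

/-- A complex projective 2-design: the averaged two-fold tensor power of the projectors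
equals the normalized projector onto the symmetric subspace, `(I + SWAP)/(D(D+1))`. -/
def TwoDesign {n : Type*} [Fintype n] [DecidableEq n] {m : ℕ} (φ : Fin m → n → ℂ) : Prop :=
  (1/(m:ℂ)) • ∑ j, (proj (φ j)) ⊗ₖ (proj (φ j)) =
    (1/((Fintype.card n : ℂ) * (Fintype.card n + 1))) • (1 + swapM n)


/-- Partial trace over the second factor. -/
def redA {a b : Type*} [Fintype b] (M : Matrix (a × b) (a × b) ℂ) : Matrix a a ℂ :=
  Matrix.of fun x y => ∑ z, M (x, z) (y, z)

/-- For a bipartite 2-design the average purity of the `A`-reduction equals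
`(d_A + d_B)/(d_A d_B + 1)`, which lies strictly between `1/d_A` and `1` for `d_A, d_B ≥ 2`. -/
theorem stmt_18 (dA dB m : ℕ) (hA : 1 ≤ dA) (hB : 1 ≤ dB) (hm : 0 < m)
    (φ : Fin m → (Fin dA × Fin dB) → ℂ) (hunit : ∀ j, inner' (φ j) (φ j) = 1)
    (hdes : TwoDesign φ) :
    ((1/(m : ℂ)) * ∑ j, (redA (proj (φ j)) * redA (proj (φ j))).trace
        = ((dA : ℂ) + (dB : ℂ)) / ((dA : ℂ) * (dB : ℂ) + 1))
    ∧ (2 ≤ dA → 2 ≤ dB →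
        1/(dA : ℝ) < ((dA : ℝ) + (dB : ℝ))/((dA : ℝ) * (dB : ℝ) + 1)
        ∧ ((dA : ℝ) + (dB : ℝ))/((dA : ℝ) * (dB : ℝ) + 1) < 1) := by
  constructor
  · -- main computation
    have hD : (Fintype.card (Fin dA × Fin dB) : ℂ) = (dA : ℂ) * dB := by
      simp [Fintype.card_prod]
    -- entrywise consequence of the design equation
    have key : ∀ (x y : Fin dA) (z w : Fin dB),
        (1/(m:ℂ)) * ∑ j, proj (φ j) (x, z) (y, z) * proj (φ j) (y, w) (x, w)
        = (1/(((dA:ℂ)*dB) * ((dA:ℂ)*dB + 1))) *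
            ((if x = y then 1 else 0) + (if z = w then 1 else 0)) := by
      intro x y z w
      have h := congrFun (congrFun hdes ((x, z), (y, w))) ((y, z), (x, w))
      simp only [Matrix.smul_apply, Matrix.sum_apply, Matrix.kroneckerMap_apply,
        Matrix.add_apply, Matrix.one_apply, swapM, Matrix.of_apply, smul_eq_mul,
        hD] at h
      rw [h]
      congr 1
      have h1 : (((x, z), (y, w)) = ((y, z), (x, w)) : Prop) ↔ x = y := by
        constructor
        · intro hh; exact (Prod.ext_iff.1 (Prod.ext_iff.1 hh).1).1
        · intro hh; subst hh; rfl
      have h2 : ((x, z) = (x, w) ∧ (y, w) = (y, z) : Prop) ↔ z = w := by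
        constructor
        · intro hh; exact (Prod.ext_iff.1 hh.1).2
        · intro hh; subst hh; exact ⟨rfl, rfl⟩
      rw [if_congr h1 rfl rfl, if_congr h2 rfl rfl]
    -- expand the trace
    have htr : ∀ j, (redA (proj (φ j)) * redA (proj (φ j))).trace
        = ∑ x : Fin dA, ∑ y : Fin dA, ∑ z : Fin dB, ∑ w : Fin dB,
            proj (φ j) (x, z) (y, z) * proj (φ j) (y, w) (x, w) := by
      intro j
      simp only [Matrix.trace, Matrix.diag_apply, Matrix.mul_apply]
      refine Finset.sum_congr rfl fun x _ => Finset.sum_congr rfl fun y _ => ?_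
      simp only [redA, Matrix.of_apply]
      rw [Finset.sum_mul_sum]
    calc (1/(m : ℂ)) * ∑ j, (redA (proj (φ j)) * redA (proj (φ j))).trace
        = ∑ x : Fin dA, ∑ y : Fin dA, ∑ z : Fin dB, ∑ w : Fin dB,
            (1/(m:ℂ)) * ∑ j, proj (φ j) (x, z) (y, z) * proj (φ j) (y, w) (x, w) := by
          simp only [htr, Finset.mul_sum]
          rw [Finset.sum_comm]
          refine Finset.sum_congr rfl fun x _ => ?_
          rw [Finset.sum_comm]
          refine Finset.sum_congr rfl fun y _ => ?_
          rw [Finset.sum_comm]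
          refine Finset.sum_congr rfl fun z _ => ?_
          rw [Finset.sum_comm]
      _ = ∑ x : Fin dA, ∑ y : Fin dA, ∑ z : Fin dB, ∑ w : Fin dB,
            (1/(((dA:ℂ)*dB) * ((dA:ℂ)*dB + 1))) *
              ((if x = y then 1 else 0) + (if z = w then 1 else 0)) := by
          simp only [key]
      _ = ((dA : ℂ) + (dB : ℂ)) / ((dA : ℂ) * (dB : ℂ) + 1) := by
          simp only [mul_add, Finset.sum_add_distrib, Finset.mul_sum]
          simp only [mul_ite, mul_one, mul_zero, Finset.sum_ite_eq', Finset.sum_ite_eq,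
            Finset.mem_univ, if_true, Finset.sum_const, Finset.card_univ,
            Fintype.card_fin, nsmul_eq_mul]
          have hdA : ((dA:ℂ)) ≠ 0 := Nat.cast_ne_zero.2 (by omega)
          have hdB : ((dB:ℂ)) ≠ 0 := Nat.cast_ne_zero.2 (by omega)
          have hD1 : ((dA:ℂ)*dB + 1) ≠ 0 := by
            have := Nat.cast_add_one_ne_zero (R := ℂ) (dA*dB)
            push_cast at this
            exact this
          field_simp
          ring
  · -- the inequalities
    intro h2A h2B
    have hA' : (2:ℝ) ≤ dA := by exact_mod_cast h2A
    have hB' : (2:ℝ) ≤ dB := by exact_mod_cast h2B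
    have hden : (0:ℝ) < (dA:ℝ) * dB + 1 := by nlinarith
    have hdA : (0:ℝ) < (dA:ℝ) := by linarith
    constructor
    · rw [div_lt_div_iff₀ hdA hden]
      nlinarith
    · rw [div_lt_one hden]
      nlinarith
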